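/- Let φ : [0,∞) × ℝ → ℂ be continuous, differentiable in t and ξ, satisfying ∂_t φ(t,ξ) = (1/4) ξ ∂_ξ φ(t,ξ) + φ(t,ξ/2)² − φ(t,ξ) for all t ≥ 0 and ξ ∈ ℝ, with |φ(t,ξ)| ≤ 1 everywhere. Assume that |φ(0,ξ)| ≤ Φ(aξ) for some a > 0 and all ξ ∈ ℝ. Then |φ(t,ξ)| ≤ Φ(aξ) for all t ≥ 0 and all ξ ∈ ℝ. -/

import Mathlib

open MeasureTheory Real Set Filter

noncomputable section

/-- `Φ(ξ) = (1+|ξ|)e^{−|ξ|}`, the Fourier transform of the steady Maxwell profile. -/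
def Phi (ξ : ℝ) : ℝ := (1 + |ξ|) * Real.exp (-|ξ|)


lemma Phi_pos (x : ℝ) : 0 < Phi x := by
  unfold Phi; positivity

lemma Phi_le_one (x : ℝ) : Phi x ≤ 1 := by
  unfold Phi
  have h1 : (1 + |x|) ≤ Real.exp |x| := by
    have := Real.add_one_le_exp |x|; linarith
  have h2 : (0:ℝ) ≤ Real.exp (-|x|) := (Real.exp_pos _).le
  calc (1 + |x|) * Real.exp (-|x|) ≤ Real.exp |x| * Real.exp (-|x|) := by
        exact mul_le_mul_of_nonneg_right h1 h2
    _ = 1 := by rw [← Real.exp_add]; simp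

lemma Phi_zero : Phi 0 = 1 := by simp [Phi]

lemma Phi_key (a x : ℝ) (ha : 0 < a) :
    x/4 * (-(a^2*x) * Real.exp (-(a*|x|))) = Phi (a*x) - (Phi (a*(x/2)))^2 := by
  have habs : |a*x| = a*|x| := by rw [abs_mul, abs_of_pos ha]
  have hx2 : |a*(x/2)| = a*|x|/2 := by
    rw [abs_mul, abs_of_pos ha, abs_div]
    norm_num
    ring
  have hxx : x*x = |x| * |x| := (abs_mul_abs_self x).symm
  unfold Phi
  rw [habs, hx2, mul_pow]
  have he : Real.exp (-(a*|x|/2)) ^ 2 = Real.exp (-(a*|x|)) := by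
    rw [sq, ← Real.exp_add]; ring_nf
  rw [he]
  linear_combination (-(Real.exp (-(a*|x|)) * a^2)/4) * hxx

lemma hasDerivAt_P {a : ℝ} (ha : 0 < a) {x : ℝ} (hx : x ≠ 0) :
    HasDerivAt (fun ξ => Phi (a*ξ)) (-(a^2*x) * Real.exp (-(a*|x|))) x := by
  rcases hx.lt_or_gt with hneg | hpos
  · -- x < 0 : Phi (a ξ) = (1 - a ξ) * exp (a ξ) near x
    have h1 : HasDerivAt (fun ξ : ℝ => 1 - a*ξ) (-a) x := by
      simpa using ((hasDerivAt_id x).const_mul a).const_sub 1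
    have h2 : HasDerivAt (fun ξ : ℝ => Real.exp (a*ξ)) (Real.exp (a*x) * a) x := by
      simpa using ((hasDerivAt_id x).const_mul a).exp
    have h3 := h1.mul h2
    have hev : (fun ξ => Phi (a*ξ)) =ᶠ[nhds x] fun ξ => (1 - a*ξ) * Real.exp (a*ξ) := by
      filter_upwards [eventually_lt_nhds hneg] with ξ hξ
      have : |a*ξ| = -(a*ξ) := abs_of_neg (by nlinarith)
      simp only [Phi, this]; ring_nf
    have := h3.congr_of_eventuallyEq hev
    refine this.congr_deriv ?_
    rw [abs_of_neg hneg]; ring_nf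
  · have h1 : HasDerivAt (fun ξ : ℝ => 1 + a*ξ) a x := by
      simpa using ((hasDerivAt_id x).const_mul a).const_add 1
    have h2 : HasDerivAt (fun ξ : ℝ => Real.exp (-(a*ξ))) (Real.exp (-(a*x)) * -a) x := by
      simpa using (((hasDerivAt_id x).const_mul a).neg).exp
    have h3 := h1.mul h2
    have hev : (fun ξ => Phi (a*ξ)) =ᶠ[nhds x] fun ξ => (1 + a*ξ) * Real.exp (-(a*ξ)) := by
      filter_upwards [eventually_gt_nhds hpos] with ξ hξ
      have : |a*ξ| = a*ξ := abs_of_pos (by positivity)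
      simp only [Phi, this]
    have := h3.congr_of_eventuallyEq hev
    refine this.congr_deriv ?_
    rw [abs_of_pos hpos]; ring_nf

lemma hasDerivAt_norm_complex {f : ℝ → ℂ} {d : ℂ} {t : ℝ} (hf : HasDerivAt f d t)
    (hz : f t ≠ 0) :
    HasDerivAt (fun s => ‖f s‖) (((f t).re * d.re + (f t).im * d.im) / ‖f t‖) t := by
  have hre : HasDerivAt (fun s => (f s).re) d.re t := by
    simpa [Function.comp_def] using (Complex.reCLM.hasFDerivAt.comp_hasDerivAt t hf)
  have him : HasDerivAt (fun s => (f s).im) d.im t := by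
    simpa [Function.comp_def] using (Complex.imCLM.hasFDerivAt.comp_hasDerivAt t hf)
  have hq : HasDerivAt (fun s => (f s).re * (f s).re + (f s).im * (f s).im)
      (d.re * (f t).re + (f t).re * d.re + (d.im * (f t).im + (f t).im * d.im)) t :=
    (hre.mul hre).add (him.mul him)
  have hQpos : 0 < (f t).re * (f t).re + (f t).im * (f t).im := by
    have := Complex.normSq_pos.mpr hz
    rwa [Complex.normSq_apply] at this
  have hs : HasDerivAt Real.sqrt
      (1 / (2 * Real.sqrt ((f t).re * (f t).re + (f t).im * (f t).im)))
      ((f t).re * (f t).re + (f t).im * (f t).im) := hasDerivAt_sqrt hQpos.ne'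
  have hcomp := hs.comp t hq
  have hnorm : ‖f t‖ = Real.sqrt ((f t).re * (f t).re + (f t).im * (f t).im) := by
    rw [Complex.norm_def, Complex.normSq_apply]
  have hnpos : 0 < ‖f t‖ := norm_pos_iff.mpr hz
  have hfun : (fun s => ‖f s‖) = (Real.sqrt ∘ fun s => (f s).re * (f s).re + (f s).im * (f s).im) := by
    funext s
    simp [Complex.norm_def, Complex.normSq_apply, Function.comp]
  rw [hfun]
  refine hcomp.congr_deriv ?_
  rw [← hnorm]
  field_simp
  ring

set_option maxHeartbeats 2000000 in
lemma step_lemma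
    (φ : ℝ → ℝ → ℂ) (a : ℝ) (ha : 0 < a)
    (hcont : Continuous fun p : ℝ × ℝ => φ p.1 p.2)
    (hdiff_t : ∀ t ξ : ℝ, 0 ≤ t → DifferentiableAt ℝ (fun s => φ s ξ) t)
    (hdiff_x : ∀ t ξ : ℝ, 0 ≤ t → DifferentiableAt ℝ (fun η => φ t η) ξ)
    (heq : ∀ t ξ : ℝ, 0 ≤ t →
      deriv (fun s => φ s ξ) t =
        (1/4 : ℂ) * (ξ : ℂ) * deriv (fun η => φ t η) ξ + (φ t (ξ/2)) ^ 2 - φ t ξ)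
    (hbdd : ∀ t ξ : ℝ, 0 ≤ t → ‖φ t ξ‖ ≤ 1)
    (hinit : ∀ ξ : ℝ, ‖φ 0 ξ‖ ≤ Phi (a * ξ)) :
    ∀ t ξ : ℝ, 0 ≤ t → t ≤ 1/9 → ‖φ t ξ‖ ≤ Phi (a * ξ) := by
  intro t₀ ξ₀ ht₀ ht₀'
  have hPhicont : Continuous Phi := by
    unfold Phi
    exact (continuous_const.add continuous_abs).mul (Real.continuous_exp.comp continuous_abs.neg)
  have key : ∀ δ : ℝ, 0 < δ → δ * (1 + ξ₀^2) < 1 →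
      ‖φ t₀ ξ₀‖ ≤ Phi (a*ξ₀) + Real.exp (17*t₀) * (δ * (1+ξ₀^2)) := by
    intro δ hδ hδsmall
    have hδ1 : δ < 1 := by nlinarith only [sq_nonneg ξ₀, hδ, hδsmall]
    set R : ℝ := Real.sqrt (1/δ - 1) with hRdef
    have hinv : (0:ℝ) ≤ 1/δ - 1 := by
      rw [le_sub_iff_add_le, zero_add, le_div_iff₀ hδ, one_mul]; exact hδ1.le
    have hR0 : 0 ≤ R := Real.sqrt_nonneg _
    have hRR : 1 + R^2 = 1/δ := by
      rw [hRdef, Real.sq_sqrt hinv]; ring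
    have hδR : δ * (1 + R^2) = 1 := by
      rw [hRR]; field_simp
    have hsqlt : ξ₀^2 < R^2 := by nlinarith only [hδ, hδsmall, hδR]
    have hξ₀R : |ξ₀| < R := by
      rw [← Real.sqrt_sq_eq_abs, ← Real.sqrt_sq hR0]
      exact Real.sqrt_lt_sqrt (sq_nonneg _) hsqlt
    set v : ℝ × ℝ → ℝ := fun p =>
      Real.exp (-(17*p.1)) * (‖φ p.1 p.2‖ - Phi (a*p.2)) - δ*(1+p.2^2) with hvdef
    have hvcont : Continuous v := by
      apply Continuous.sub
      · exact (Real.continuous_exp.comp ((continuous_const.mul continuous_fst).neg)).mul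
          ((hcont.norm).sub (hPhicont.comp (continuous_const.mul continuous_snd)))
      · exact continuous_const.mul (continuous_const.add (continuous_snd.pow 2))
    set K : Set (ℝ × ℝ) := Icc (0:ℝ) (1/9) ×ˢ Icc (-R) R with hKdef
    have hKc : IsCompact K := isCompact_Icc.prod isCompact_Icc
    have hKne : K.Nonempty := ⟨(0, 0), by
      constructor
      · constructor <;> norm_num
      · constructor <;> simpa using hR0⟩
    obtain ⟨p, hpK, hmax⟩ := hKc.exists_isMaxOn hKne hvcont.continuousOn
    have hgoalK : (t₀, ξ₀) ∈ K := by
      refine ⟨⟨ht₀, ht₀'⟩, ?_, ?_⟩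
      · have := (abs_lt.mp hξ₀R).1; linarith
      · exact (abs_lt.mp hξ₀R).2.le
    suffices hM : v p ≤ 0 by
      have h1 : v (t₀, ξ₀) ≤ 0 := le_trans (hmax hgoalK) hM
      have h2 : Real.exp (-(17*t₀)) * (‖φ t₀ ξ₀‖ - Phi (a*ξ₀)) ≤ δ*(1+ξ₀^2) := by
        simpa [hvdef] using h1
      have hprod : Real.exp (-(17*t₀)) * Real.exp (17*t₀) = 1 := by
        rw [← Real.exp_add]; norm_num
      have hEpos : 0 < Real.exp (17*t₀) := Real.exp_pos _
      have hid : Real.exp (-(17*t₀)) * (‖φ t₀ ξ₀‖ - Phi (a*ξ₀)) * Real.exp (17*t₀)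
          = ‖φ t₀ ξ₀‖ - Phi (a*ξ₀) := by
        rw [mul_right_comm, hprod, one_mul]
      have hh := mul_le_mul_of_nonneg_right h2 hEpos.le
      rw [hid] at hh
      linarith
    by_contra hMneg
    push_neg at hMneg
    obtain ⟨t, x⟩ := p
    obtain ⟨⟨ht1, ht2⟩, hx1, hx2⟩ := hpK
    replace ht1 : (0:ℝ) ≤ t := ht1
    replace ht2 : t ≤ 1/9 := ht2
    replace hx1 : -R ≤ x := hx1
    replace hx2 : x ≤ R := hx2
    have hmaxE : ∀ s ξ' : ℝ, (s, ξ') ∈ K →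
        Real.exp (-(17*s)) * (‖φ s ξ'‖ - Phi (a*ξ')) - δ*(1+ξ'^2)
          ≤ Real.exp (-(17*t)) * (‖φ t x‖ - Phi (a*x)) - δ*(1+x^2) := by
      intro s ξ' h
      simpa only [hvdef, Set.mem_setOf_eq] using hmax h
    obtain ⟨M, hMdef⟩ : ∃ m : ℝ,
        m = Real.exp (-(17*t)) * (‖φ t x‖ - Phi (a*x)) - δ*(1+x^2) := ⟨_, rfl⟩
    have hMpos : 0 < M := by
      rw [hMdef]
      simpa only [hvdef] using hMneg
    clear hmax hMneg hvcont
    have hempos : 0 < Real.exp (-(17*t)) := Real.exp_pos _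
    -- exclude t = 0
    have ht_pos : 0 < t := by
      rcases ht1.lt_or_eq with h | h
      · exact h
      · exfalso
        have h0 : ‖φ 0 x‖ - Phi (a*x) ≤ 0 := by linarith [hinit x]
        rw [hMdef, show t = 0 from h.symm] at hMpos
        linarith only [hMpos,
          mul_nonpos_of_nonneg_of_nonpos (Real.exp_pos (-(17*(0:ℝ)))).le h0,
          mul_pos hδ (show (0:ℝ) < 1+x^2 by positivity)]
    have hem1 : Real.exp (-(17*t)) ≤ 1 := by
      rw [show (1:ℝ) = Real.exp 0 by simp]
      exact Real.exp_le_exp.mpr (by linarith)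
    -- exclude |x| = R
    have hxR : |x| < R := by
      rcases lt_or_eq_of_le (abs_le.mpr ⟨hx1, hx2⟩) with h | h
      · exact h
      · exfalso
        have hx2R : x^2 = R^2 := by rw [← sq_abs, h]
        have hNle : ‖φ t x‖ - Phi (a*x) ≤ 1 := by
          have := hbdd t x ht1; have := Phi_pos (a*x); linarith
        rw [hMdef, hx2R, hδR] at hMpos
        linarith only [hMpos, hem1, mul_le_mul_of_nonneg_left hNle hempos.le]
    -- exclude x = 0
    have hx0 : x ≠ 0 := by
      intro h
      have hP0 : Phi (a*(0:ℝ)) = 1 := by rw [mul_zero, Phi_zero]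
      have h1 : ‖φ t 0‖ - Phi (a*(0:ℝ)) ≤ 0 := by linarith [hbdd t 0 ht1, hP0.le]
      rw [hMdef, h] at hMpos
      linarith only [hMpos, hδ, mul_nonpos_of_nonneg_of_nonpos hempos.le h1]
    -- basic positivity facts
    have hWpos : 0 < 1 + x^2 := by positivity
    have hPpos : 0 < Phi (a*x) := Phi_pos _
    have hP2pos : 0 < Phi (a*(x/2)) := Phi_pos _
    have hP2le1 : Phi (a*(x/2)) ≤ 1 := Phi_le_one _
    have hEpos : 0 < Real.exp (17*t) := Real.exp_pos _
    have hemE : Real.exp (-(17*t)) * Real.exp (17*t) = 1 := by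
      rw [← Real.exp_add]; norm_num
    have hNval : ‖φ t x‖ - Phi (a*x) = Real.exp (17*t) * (M + δ*(1+x^2)) := by
      linear_combination Real.exp (17*t) * hMdef.symm - (‖φ t x‖ - Phi (a*x)) * hemE
    have hNpos : 0 < ‖φ t x‖ := by
      linarith only [hPpos, hNval,
        mul_pos hEpos (show 0 < M + δ*(1+x^2) by linarith only [hMpos, mul_pos hδ hWpos])]
    have hz : φ t x ≠ 0 := by
      intro h; rw [h] at hNpos; simp at hNpos
    -- derivatives
    have hDt : HasDerivAt (fun s => φ s x) (deriv (fun s => φ s x) t) t :=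
      (hdiff_t t x ht1).hasDerivAt
    have hDx : HasDerivAt (fun η => φ t η) (deriv (fun η => φ t η) x) x :=
      (hdiff_x t x ht1).hasDerivAt
    have hnt : HasDerivAt (fun s => ‖φ s x‖)
        (((φ t x).re * (deriv (fun s => φ s x) t).re
          + (φ t x).im * (deriv (fun s => φ s x) t).im) / ‖φ t x‖) t :=
      hasDerivAt_norm_complex hDt hz
    have hnx : HasDerivAt (fun η => ‖φ t η‖)
        (((φ t x).re * (deriv (fun η => φ t η) x).re
          + (φ t x).im * (deriv (fun η => φ t η) x).im) / ‖φ t x‖) x :=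
      hasDerivAt_norm_complex hDx hz
    -- (G1) interior maximum in ξ: derivative vanishes
    have hpoly : HasDerivAt (fun ξ : ℝ => δ*(1+ξ^2)) (δ*(2*x)) x := by
      have h := ((hasDerivAt_pow 2 x).const_add (1:ℝ)).const_mul δ
      simpa using h
    have hg1 : HasDerivAt (fun ξ => Real.exp (-(17*t)) * (‖φ t ξ‖ - Phi (a*ξ)) - δ*(1+ξ^2))
        (Real.exp (-(17*t)) * ((((φ t x).re * (deriv (fun η => φ t η) x).re
          + (φ t x).im * (deriv (fun η => φ t η) x).im) / ‖φ t x‖)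
          - (-(a^2*x) * Real.exp (-(a*|x|)))) - δ*(2*x)) x :=
      ((hnx.sub (hasDerivAt_P ha hx0)).const_mul _).sub hpoly
    have hloc : IsLocalMax
        (fun ξ => Real.exp (-(17*t)) * (‖φ t ξ‖ - Phi (a*ξ)) - δ*(1+ξ^2)) x := by
      have hx' := abs_lt.mp hxR
      filter_upwards [Ioo_mem_nhds hx'.1 hx'.2] with ξ hξ
      exact hmaxE t ξ ⟨⟨ht1, ht2⟩, hξ.1.le, hξ.2.le⟩
    have hG1 := hloc.hasDerivAt_eq_zero hg1
    have hnxval : (((φ t x).re * (deriv (fun η => φ t η) x).re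
          + (φ t x).im * (deriv (fun η => φ t η) x).im) / ‖φ t x‖)
        = (-(a^2*x) * Real.exp (-(a*|x|))) + δ*(2*x)*Real.exp (17*t) := by
      linear_combination Real.exp (17*t) * hG1
        - ((((φ t x).re * (deriv (fun η => φ t η) x).re
          + (φ t x).im * (deriv (fun η => φ t η) x).im) / ‖φ t x‖)
          - (-(a^2*x) * Real.exp (-(a*|x|)))) * hemE
    -- (G2) maximum in t from the left: time derivative ≥ 0
    have hexp' : HasDerivAt (fun s : ℝ => Real.exp (-(17*s))) (Real.exp (-(17*t)) * (-17)) t := by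
      have h := (((hasDerivAt_id t).const_mul (17:ℝ)).neg).exp
      simpa using h
    have hg2 : HasDerivAt (fun s => Real.exp (-(17*s)) * (‖φ s x‖ - Phi (a*x)) - δ*(1+x^2))
        ((Real.exp (-(17*t)) * (-17)) * (‖φ t x‖ - Phi (a*x))
          + Real.exp (-(17*t)) * (((φ t x).re * (deriv (fun s => φ s x) t).re
          + (φ t x).im * (deriv (fun s => φ s x) t).im) / ‖φ t x‖)) t :=
      (hexp'.mul (hnt.sub_const (Phi (a*x)))).sub_const (δ*(1+x^2))
    have hd2 : 0 ≤ (Real.exp (-(17*t)) * (-17)) * (‖φ t x‖ - Phi (a*x))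
          + Real.exp (-(17*t)) * (((φ t x).re * (deriv (fun s => φ s x) t).re
          + (φ t x).im * (deriv (fun s => φ s x) t).im) / ‖φ t x‖) := by
      have hslope := hasDerivAt_iff_tendsto_slope.mp hg2
      have hsub : Iio t ⊆ {t}ᶜ := fun s hs => ne_of_lt hs
      have hmono := hslope.mono_left (nhdsWithin_mono t hsub)
      refine ge_of_tendsto hmono ?_
      filter_upwards [Ioo_mem_nhdsLT_of_mem (show t ∈ Ioc 0 t from ⟨ht_pos, le_refl t⟩)]
        with s hs
      have hle : Real.exp (-(17*s)) * (‖φ s x‖ - Phi (a*x)) - δ*(1+x^2)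
          ≤ Real.exp (-(17*t)) * (‖φ t x‖ - Phi (a*x)) - δ*(1+x^2) :=
        hmaxE s x ⟨⟨hs.1.le, hs.2.le.trans ht2⟩, hx1, hx2⟩
      rw [slope_def_field]
      exact div_nonneg_iff.mpr (Or.inr ⟨by linarith, by linarith [hs.2]⟩)
    have hnt17 : 17*(‖φ t x‖ - Phi (a*x))
        ≤ (((φ t x).re * (deriv (fun s => φ s x) t).re
          + (φ t x).im * (deriv (fun s => φ s x) t).im) / ‖φ t x‖) := by
      nlinarith only [hd2, hempos]
    -- (G3) the PDE at the maximum point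
    have hpde := heq t x ht1
    have hcast : (1/4 : ℂ) * (x:ℂ) = ((x/4 : ℝ) : ℂ) := by push_cast; ring
    rw [hcast] at hpde
    have hre : (deriv (fun s => φ s x) t).re
        = (x/4) * (deriv (fun η => φ t η) x).re + ((φ t (x/2))^2).re - (φ t x).re := by
      rw [hpde]; simp [Complex.add_re, Complex.sub_re, Complex.mul_re]
    have him : (deriv (fun s => φ s x) t).im
        = (x/4) * (deriv (fun η => φ t η) x).im + ((φ t (x/2))^2).im - (φ t x).im := by
      rw [hpde]; simp [Complex.add_im, Complex.sub_im, Complex.mul_im]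
    have hC : (φ t x).re * ((φ t (x/2))^2).re + (φ t x).im * ((φ t (x/2))^2).im
        ≤ ‖φ t x‖ * ‖φ t (x/2)‖^2 := by
      have h1 : (φ t x).re * ((φ t (x/2))^2).re + (φ t x).im * ((φ t (x/2))^2).im
          = ((starRingEnd ℂ) (φ t x) * (φ t (x/2))^2).re := by
        simp [Complex.mul_re, Complex.conj_re, Complex.conj_im]
      rw [h1]
      calc ((starRingEnd ℂ) (φ t x) * (φ t (x/2))^2).re
          ≤ ‖(starRingEnd ℂ) (φ t x) * (φ t (x/2))^2‖ := Complex.re_le_norm _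
        _ = ‖φ t x‖ * ‖φ t (x/2)‖^2 := by
            rw [norm_mul, norm_pow, Complex.norm_conj]
    have hzz : (φ t x).re * (φ t x).re + (φ t x).im * (φ t x).im = ‖φ t x‖^2 := by
      rw [Complex.sq_norm, Complex.normSq_apply]
    have hfrac : (((φ t x).re * (deriv (fun s => φ s x) t).re
          + (φ t x).im * (deriv (fun s => φ s x) t).im) / ‖φ t x‖)
          - (x/4) * (((φ t x).re * (deriv (fun η => φ t η) x).re
          + (φ t x).im * (deriv (fun η => φ t η) x).im) / ‖φ t x‖)
        ≤ ‖φ t (x/2)‖^2 - ‖φ t x‖ := by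
      have hnum : (φ t x).re * (deriv (fun s => φ s x) t).re
            + (φ t x).im * (deriv (fun s => φ s x) t).im
          = (x/4) * ((φ t x).re * (deriv (fun η => φ t η) x).re
            + (φ t x).im * (deriv (fun η => φ t η) x).im)
            + ((φ t x).re * ((φ t (x/2))^2).re + (φ t x).im * ((φ t (x/2))^2).im)
            - ‖φ t x‖^2 := by
        rw [hre, him, ← hzz]; ring
      have heq2 : (((φ t x).re * (deriv (fun s => φ s x) t).re
            + (φ t x).im * (deriv (fun s => φ s x) t).im) / ‖φ t x‖)
            - (x/4) * (((φ t x).re * (deriv (fun η => φ t η) x).re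
            + (φ t x).im * (deriv (fun η => φ t η) x).im) / ‖φ t x‖)
          = (((φ t x).re * (deriv (fun s => φ s x) t).re
            + (φ t x).im * (deriv (fun s => φ s x) t).im)
            - (x/4) * ((φ t x).re * (deriv (fun η => φ t η) x).re
            + (φ t x).im * (deriv (fun η => φ t η) x).im)) / ‖φ t x‖ := by
        field_simp
      rw [heq2, div_le_iff₀ hNpos]
      linarith only [hnum, hC]
    -- combine
    have hkey := Phi_key a x ha
    have hxnx : (x/4) * (((φ t x).re * (deriv (fun η => φ t η) x).re
          + (φ t x).im * (deriv (fun η => φ t η) x).im) / ‖φ t x‖)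
        = (Phi (a*x) - (Phi (a*(x/2)))^2) + δ*x^2*Real.exp (17*t)/2 := by
      rw [hnxval]; linear_combination hkey
    have hmain : 17*(‖φ t x‖ - Phi (a*x))
          - ((Phi (a*x) - (Phi (a*(x/2)))^2) + δ*x^2*Real.exp (17*t)/2)
        ≤ ‖φ t (x/2)‖^2 - ‖φ t x‖ := by
      linarith [hfrac, hnt17, hxnx]
    -- bound at (t, x/2)
    have hx2K : ((t : ℝ), x/2) ∈ K :=
      ⟨⟨ht1, ht2⟩, ⟨by linarith, by linarith⟩⟩
    have hvx2 := (hmaxE t (x/2) hx2K).trans hMdef.ge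
    have hN2le : ‖φ t (x/2)‖ ≤ Phi (a*(x/2)) + Real.exp (17*t) * (M + δ*(1+(x/2)^2)) := by
      have hid : Real.exp (-(17*t)) * (‖φ t (x/2)‖ - Phi (a*(x/2))) * Real.exp (17*t)
          = ‖φ t (x/2)‖ - Phi (a*(x/2)) := by rw [mul_right_comm, hemE, one_mul]
      have hh := mul_le_mul_of_nonneg_right hvx2 hEpos.le
      linarith only [hh, hid]
    -- opaque abbreviations
    obtain ⟨A, hAdef⟩ : ∃ m : ℝ, m = Real.exp (17*t) * (M + δ*(1+x^2)) := ⟨_, rfl⟩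
    obtain ⟨A2, hA2def⟩ : ∃ m : ℝ, m = Real.exp (17*t) * (M + δ*(1+(x/2)^2)) := ⟨_, rfl⟩
    rw [← hAdef] at hNval
    rw [← hA2def] at hN2le
    have hW2pos : (0:ℝ) < 1 + (x/2)^2 := by positivity
    have hApos : 0 < A := by
      rw [hAdef]; exact mul_pos hEpos (by linarith only [hMpos, mul_pos hδ hWpos])
    have hA2pos : 0 ≤ A2 := by
      rw [hA2def]; exact (mul_pos hEpos (by linarith only [hMpos, mul_pos hδ hW2pos])).le
    have hA2A : A2 ≤ A := by
      rw [hAdef, hA2def]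
      linarith only [mul_nonneg (mul_pos hEpos hδ).le (sq_nonneg x)]
    have hδW : δ*(1+x^2) ≤ 1 := by
      have hx2R : x^2 < R^2 := by
        have h1 : |x| * |x| < R * R := by
          apply mul_lt_mul' hxR.le hxR (abs_nonneg x) (lt_of_le_of_lt (abs_nonneg x) hxR)
        linarith only [h1, sq_abs x]
      linarith only [hδR, mul_le_mul_of_nonneg_left hx2R.le hδ.le]
    have hM1 : M ≤ 1 := by
      have hNle1 : ‖φ t x‖ ≤ 1 := hbdd t x ht1
      have h1 : Real.exp (-(17*t)) * (‖φ t x‖ - Phi (a*x)) ≤ 1 := by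
        linarith only [hem1,
          mul_le_mul_of_nonneg_left (show ‖φ t x‖ - Phi (a*x) ≤ 1 by linarith only [hNle1, hPpos]) hempos.le]
      linarith only [hMdef.le, h1, mul_pos hδ hWpos]
    have hE739 : Real.exp (17*t) ≤ 7.39 := by
      have h1 : Real.exp (17*t) ≤ Real.exp 2 := Real.exp_le_exp.mpr (by linarith)
      have h4 : Real.exp 2 = Real.exp 1 * Real.exp 1 := by rw [← Real.exp_add]; norm_num
      have h3 := Real.exp_one_lt_d9
      have h5 := mul_le_mul_of_nonneg_left h3.le (Real.exp_pos 1).le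
      have h6 := mul_le_mul_of_nonneg_right h3.le (show (0:ℝ) ≤ 2.7182818286 by norm_num)
      linarith only [h1, h4, h5, h6]
    have hA14 : A ≤ 14.78 := by
      rw [hAdef]
      have h2 : M + δ*(1+x^2) ≤ 2 := by linarith
      calc Real.exp (17*t) * (M + δ*(1+x^2)) ≤ Real.exp (17*t) * 2 :=
            mul_le_mul_of_nonneg_left h2 hEpos.le
        _ ≤ 7.39 * 2 := mul_le_mul_of_nonneg_right hE739 (by norm_num)
        _ = 14.78 := by norm_num
    have hδx2E : δ*x^2*Real.exp (17*t) ≤ A := by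
      rw [hAdef]
      linarith only [mul_pos hEpos hMpos, mul_pos hEpos hδ]
    have hN2nn : (0:ℝ) ≤ ‖φ t (x/2)‖ := norm_nonneg _
    have hsq : ‖φ t (x/2)‖^2 ≤ (Phi (a*(x/2)) + A2)^2 := by
      have := mul_self_le_mul_self hN2nn hN2le
      linarith only [this]
    -- final contradiction
    linarith only [hmain, hNval, hsq, hA2A, hδx2E, hApos,
      mul_nonneg hA2pos (sub_nonneg.mpr hP2le1),
      mul_le_mul_of_nonneg_right hA2A hA2pos,
      mul_le_mul_of_nonneg_right hA14 hA2pos]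
  -- let δ → 0
  have final : ∀ ε : ℝ, 0 < ε → ‖φ t₀ ξ₀‖ ≤ Phi (a*ξ₀) + ε := by
    intro ε hε
    have hWpos : (0:ℝ) < 1 + ξ₀^2 := by positivity
    have hEpos : 0 < Real.exp (17*t₀) := Real.exp_pos _
    set δ : ℝ := min (ε / (2 * Real.exp (17*t₀) * (1+ξ₀^2))) (1/(2*(1+ξ₀^2))) with hδdef
    have hδpos : 0 < δ := by
      apply lt_min
      · positivity
      · positivity
    have hδsmall : δ * (1 + ξ₀^2) < 1 := by
      have h1 : δ ≤ 1/(2*(1+ξ₀^2)) := min_le_right _ _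
      have h2 : δ * (1+ξ₀^2) ≤ 1/(2*(1+ξ₀^2)) * (1+ξ₀^2) :=
        mul_le_mul_of_nonneg_right h1 hWpos.le
      have h3 : 1/(2*(1+ξ₀^2)) * (1+ξ₀^2) = 1/2 := by
        field_simp
      linarith [h2, h3.le]
    have hkey := key δ hδpos hδsmall
    have h1 : δ ≤ ε / (2 * Real.exp (17*t₀) * (1+ξ₀^2)) := min_le_left _ _
    have h2 : Real.exp (17*t₀) * (δ * (1+ξ₀^2)) ≤ ε := by
      have h3 : Real.exp (17*t₀) * (δ * (1+ξ₀^2))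
          ≤ Real.exp (17*t₀) * ((ε / (2 * Real.exp (17*t₀) * (1+ξ₀^2))) * (1+ξ₀^2)) := by
        apply mul_le_mul_of_nonneg_left _ hEpos.le
        exact mul_le_mul_of_nonneg_right h1 hWpos.le
      have h4 : Real.exp (17*t₀) * ((ε / (2 * Real.exp (17*t₀) * (1+ξ₀^2))) * (1+ξ₀^2))
          = ε/2 := by field_simp
      linarith
    linarith
  exact le_of_forall_pos_le_add final


/-- **Propagation of strong smoothness.** If `φ` solves the self-similar Maxwell
equation in Fourier variables with `|φ| ≤ 1` and `|φ(0,ξ)| ≤ Φ(aξ)` for some `a > 0`,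
then `|φ(t,ξ)| ≤ Φ(aξ)` for all `t ≥ 0`. -/
theorem propagation_of_strong_smoothness
    (φ : ℝ → ℝ → ℂ) (a : ℝ) (ha : 0 < a)
    (hcont : Continuous fun p : ℝ × ℝ => φ p.1 p.2)
    (hdiff_t : ∀ t ξ : ℝ, 0 ≤ t → DifferentiableAt ℝ (fun s => φ s ξ) t)
    (hdiff_x : ∀ t ξ : ℝ, 0 ≤ t → DifferentiableAt ℝ (fun η => φ t η) ξ)
    (heq : ∀ t ξ : ℝ, 0 ≤ t →
      deriv (fun s => φ s ξ) t =
        (1/4 : ℂ) * (ξ : ℂ) * deriv (fun η => φ t η) ξ + (φ t (ξ/2)) ^ 2 - φ t ξ)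
    (hbdd : ∀ t ξ : ℝ, 0 ≤ t → ‖φ t ξ‖ ≤ 1)
    (hinit : ∀ ξ : ℝ, ‖φ 0 ξ‖ ≤ Phi (a * ξ)) :
    ∀ t ξ : ℝ, 0 ≤ t → ‖φ t ξ‖ ≤ Phi (a * ξ) := by
  have main : ∀ n : ℕ, ∀ t ξ : ℝ, 0 ≤ t → t ≤ (n : ℝ) * (1/9) → ‖φ t ξ‖ ≤ Phi (a * ξ) := by
    intro n
    induction n with
    | zero =>
      intro t ξ ht htn
      have ht0 : t = 0 := le_antisymm (by simpa using htn) ht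
      rw [ht0]; exact hinit ξ
    | succ n ih =>
      intro t ξ ht htn
      by_cases hcase : t ≤ (n : ℝ) * (1/9)
      · exact ih t ξ ht hcase
      · push_neg at hcase
        have hc0 : (0:ℝ) ≤ (n : ℝ) * (1/9) := by positivity
        have hcont' : Continuous fun p : ℝ × ℝ => φ (p.1 + (n : ℝ) * (1/9)) p.2 := by
          have hmap : Continuous (fun p : ℝ × ℝ => (p.1 + (n : ℝ) * (1/9), p.2)) :=
            (continuous_fst.add continuous_const).prodMk continuous_snd
          have := hcont.comp hmap
          simpa [Function.comp_def] using this
        have hdiff_t' : ∀ s ξ' : ℝ, 0 ≤ s →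
            DifferentiableAt ℝ (fun y => φ (y + (n : ℝ) * (1/9)) ξ') s := by
          intro s ξ' hs
          have h1 := (hdiff_t (s + (n : ℝ) * (1/9)) ξ' (by linarith)).comp s
            ((differentiableAt_id.add_const ((n : ℝ) * (1/9))))
          simpa [Function.comp_def] using h1
        have hdiff_x' : ∀ s ξ' : ℝ, 0 ≤ s →
            DifferentiableAt ℝ (fun η => φ (s + (n : ℝ) * (1/9)) η) ξ' := by
          intro s ξ' hs
          exact hdiff_x (s + (n : ℝ) * (1/9)) ξ' (by linarith)
        have heq' : ∀ s ξ' : ℝ, 0 ≤ s →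
            deriv (fun y => φ (y + (n : ℝ) * (1/9)) ξ') s =
              (1/4 : ℂ) * (ξ' : ℂ) * deriv (fun η => φ (s + (n : ℝ) * (1/9)) η) ξ'
                + (φ (s + (n : ℝ) * (1/9)) (ξ'/2)) ^ 2 - φ (s + (n : ℝ) * (1/9)) ξ' := by
          intro s ξ' hs
          rw [deriv_comp_add_const (fun y => φ y ξ') ((n : ℝ) * (1/9)) s]
          exact heq (s + (n : ℝ) * (1/9)) ξ' (by linarith)
        have hbdd' : ∀ s ξ' : ℝ, 0 ≤ s → ‖φ (s + (n : ℝ) * (1/9)) ξ'‖ ≤ 1 := by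
          intro s ξ' hs
          exact hbdd (s + (n : ℝ) * (1/9)) ξ' (by linarith)
        have hinit' : ∀ ξ' : ℝ, ‖φ (0 + (n : ℝ) * (1/9)) ξ'‖ ≤ Phi (a * ξ') := by
          intro ξ'
          simpa using ih ((n : ℝ) * (1/9)) ξ' hc0 le_rfl
        have hstep := step_lemma (fun y ξ' => φ (y + (n : ℝ) * (1/9)) ξ') a ha
          hcont' hdiff_t' hdiff_x' heq' hbdd' hinit'
          (t - (n : ℝ) * (1/9)) ξ (by linarith)
          (by push_cast at htn; linarith)
        simpa using hstep
  intro t ξ ht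
  have hn : t ≤ ((⌈9*t⌉₊ : ℝ)) * (1/9) := by
    have := Nat.le_ceil (9*t)
    linarith
  exact main ⌈9*t⌉₊ t ξ ht hn

end
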